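/- Let F be a compact Hausdorff topological group acting continuously on a compact Hausdorff space Z in each variable separately (the action map F × Z → Z is separately continuous). Then the action is jointly continuous. -/

import Mathlib

open Filter Topology MeasureTheory Set

section Aux

lemma cluster_mem_closed {α : Type*} [TopologicalSpace α] {u : ℕ → α} {c : α}
    (hc : MapClusterPt c atTop u) {C : Set α} (hC : IsClosed C)
    (h : ∀ᶠ n in atTop, u n ∈ C) : c ∈ C := by
  have h1 : map u atTop ≤ 𝓟 C := le_principal_iff.2 h
  have h2 : ClusterPt c (𝓟 C) := hc.clusterPt.mono h1
  rwa [← mem_closure_iff_clusterPt, hC.closure_eq] at h2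

lemma cluster_eq_of_tendsto {α : Type*} [TopologicalSpace α] [T2Space α] {u : ℕ → α} {c l : α}
    (hc : MapClusterPt c atTop u) (hl : Tendsto u atTop (𝓝 l)) : c = l :=
  eq_of_nhds_neBot (hc.clusterPt.mono hl)

lemma real_eq_of_le {a b : ℝ} (h : ∀ ε : ℝ, 0 < ε → |a - b| ≤ ε) : a = b := by
  have h0 : |a - b| ≤ 0 := by
    by_contra hlt
    push_neg at hlt
    have := h (|a - b| / 2) (by linarith)
    linarith
  have h1 := abs_nonneg (a - b)
  have h2 : |a - b| = 0 := le_antisymm h0 h1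
  have := abs_eq_zero.mp h2
  linarith [sub_eq_zero.mp this]

/-- **Angelicity-type lemma**: in a pointwise-compact set of continuous functions on a
compact space, a point of the closure of a subset is a pointwise limit of a sequence
from the subset. -/
lemma ang {K : Type*} [TopologicalSpace K] [CompactSpace K]
    {H A : Set (K → ℝ)} (hH : IsCompact H) (hcont : ∀ g ∈ H, Continuous g)
    (hAH : A ⊆ H) {h : K → ℝ} (hhH : h ∈ H) (hcl : h ∈ closure A) :
    ∃ u : ℕ → (K → ℝ), (∀ n, u n ∈ A) ∧ ∀ x, Tendsto (fun n => u n x) atTop (𝓝 (h x)) := by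
  classical
  have hA_ne : A.Nonempty := by
    rcases eq_empty_or_nonempty A with rfl | hA
    · simp at hcl
    · exact hA
  -- L1 : finite nets for finite families of continuous functions
  have L1 : ∀ (G : List (K → ℝ)) (ε : ℝ), ∃ T : Finset K,
      (∀ g ∈ G, Continuous g) → 0 < ε → ∀ x : K, ∃ x' ∈ T, ∀ g ∈ G, |g x - g x'| ≤ ε := by
    intro G ε
    by_cases hG : (∀ g ∈ G, Continuous g) ∧ 0 < ε
    · obtain ⟨hGc, hε⟩ := hG
      have hopen : ∀ c : K, IsOpen {y | ∀ g ∈ G, |g y - g c| < ε} := by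
        intro c
        have he : {y | ∀ g ∈ G, |g y - g c| < ε} = ⋂ g ∈ G.toFinset, {y | |g y - g c| < ε} := by
          ext y; simp [List.mem_toFinset]
        rw [he]
        exact isOpen_biInter_finset fun g hg =>
          isOpen_lt (((hGc g (List.mem_toFinset.1 hg)).sub continuous_const).abs) continuous_const
      have hcover : (univ : Set K) ⊆ ⋃ c : K, {y | ∀ g ∈ G, |g y - g c| < ε} := by
        intro x _
        exact mem_iUnion.2 ⟨x, fun g _ => by simpa using hε⟩
      obtain ⟨t, ht⟩ := isCompact_univ.elim_finite_subcover _ hopen hcover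
      refine ⟨t, fun _ _ x => ?_⟩
      obtain ⟨c, hc, hx⟩ := by simpa using ht (mem_univ x)
      exact ⟨c, hc, fun g hg => (hx g hg).le⟩
    · exact ⟨∅, fun h1 h2 => absurd ⟨h1, h2⟩ hG⟩
  -- L2 : approximate h on finite sets by elements of A
  have L2 : ∀ (T : Finset K) (ε : ℝ), ∃ a, 0 < ε → a ∈ A ∧ ∀ x ∈ T, |a x - h x| < ε := by
    intro T ε
    by_cases hε : 0 < ε
    · have hopen : IsOpen {g : K → ℝ | ∀ x ∈ T, |g x - h x| < ε} := by
        have he : {g : K → ℝ | ∀ x ∈ T, |g x - h x| < ε}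
            = ⋂ x ∈ T, {g : K → ℝ | |g x - h x| < ε} := by ext g; simp
        rw [he]
        exact isOpen_biInter_finset fun x _ =>
          isOpen_lt (((continuous_apply x).sub continuous_const).abs) continuous_const
      have hmem : h ∈ {g : K → ℝ | ∀ x ∈ T, |g x - h x| < ε} := fun x _ => by simpa using hε
      rcases mem_closure_iff.1 hcl _ hopen hmem with ⟨a, haO, haA⟩
      exact ⟨a, fun _ => ⟨haA, haO⟩⟩
    · exact ⟨hA_ne.choose, fun hc => absurd hc hε⟩
  choose net hnet using L1
  choose apx hapx using L2
  -- the recursive construction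
  let step : ℕ → ((ℕ → (K → ℝ)) × Finset K) → ((ℕ → (K → ℝ)) × Finset K) := fun n s =>
    (Function.update s.1 n
      (apx (s.2 ∪ net (h :: (List.range n).map s.1) (1 / (n + 1))) (1 / (n + 1))),
      s.2 ∪ net (h :: (List.range n).map s.1) (1 / (n + 1)))
  let S : ℕ → (ℕ → (K → ℝ)) × Finset K := fun n => Nat.rec ((fun _ => h), ∅) step n
  have hS_succ : ∀ n, S (n + 1) = step n (S n) := fun n => rfl
  set u : ℕ → K → ℝ := fun n => (S (n + 1)).1 n with hu
  set T : ℕ → Finset K := fun n => (S (n + 1)).2 with hT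
  have hεpos : ∀ n : ℕ, (0:ℝ) < 1 / (n + 1) := fun n => by positivity
  have hle : ∀ ε : ℝ, 0 < ε → ∀ᶠ m : ℕ in atTop, 1 / ((m:ℝ) + 1) ≤ ε := by
    intro ε hε
    have hone : Tendsto (fun m : ℕ => 1 / ((m : ℝ) + 1)) atTop (𝓝 0) :=
      tendsto_one_div_add_atTop_nhds_zero_nat
    filter_upwards [hone.eventually_lt_const hε] with m hm
    exact hm.le
  have stab : ∀ n m, m < n → (S n).1 m = u m := by
    intro n
    induction n with
    | zero => exact fun m hm => absurd hm (Nat.not_lt_zero m)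
    | succ n ih =>
      intro m hm
      rcases Nat.lt_succ_iff_lt_or_eq.1 hm with hm' | rfl
      · have he : (S (n + 1)).1 m = (S n).1 m := by
          show (Function.update (S n).1 n _) m = _
          rw [Function.update_of_ne (by omega)]
        rw [he, ih m hm']
      · rfl
  have hTn_eq : ∀ n, T n = (S n).2 ∪ net (h :: (List.range n).map (S n).1) (1 / (n + 1)) :=
    fun n => rfl
  have hu_eq : ∀ n, u n = apx (T n) (1 / (n + 1)) := by
    intro n
    show (Function.update (S n).1 n _) n = _
    rw [Function.update_self]
  have huA : ∀ n, u n ∈ A := fun n => by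
    rw [hu_eq n]; exact (hapx _ _ (hεpos n)).1
  have hucont : ∀ n, Continuous (u n) := fun n => hcont _ (hAH (huA n))
  have P1 : ∀ n, ∀ x ∈ T n, |u n x - h x| < 1 / (n + 1) := by
    intro n
    rw [hu_eq n]
    exact (hapx _ _ (hεpos n)).2
  have P3 : ∀ m n, m ≤ n → T m ⊆ T n := by
    intro m n hmn
    induction n with
    | zero => rw [Nat.le_zero.1 hmn]
    | succ n ih =>
      rcases eq_or_lt_of_le hmn with rfl | hlt
      · exact subset_rfl
      · refine (ih (Nat.lt_succ_iff.1 hlt)).trans ?_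
        rw [hTn_eq (n + 1)]
        exact Finset.subset_union_left
  have P2 : ∀ n, ∀ x : K, ∃ x' ∈ T n,
      |h x - h x'| ≤ 1 / (n + 1) ∧ ∀ i < n, |u i x - u i x'| ≤ 1 / (n + 1) := by
    intro n x
    have hGc : ∀ g ∈ (h :: (List.range n).map (S n).1), Continuous g := by
      intro g hg
      rcases List.mem_cons.1 hg with rfl | hg'
      · exact hcont _ hhH
      · obtain ⟨i, hi, rfl⟩ := List.mem_map.1 hg'
        have hi' : i < n := List.mem_range.1 hi
        rw [stab n i hi']
        exact hucont i
    obtain ⟨x', hx'T, hx'⟩ := hnet _ _ hGc (hεpos n) x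
    refine ⟨x', ?_, ?_, ?_⟩
    · rw [hTn_eq n]; exact Finset.mem_union_right _ hx'T
    · exact hx' h List.mem_cons_self
    · intro i hi
      have : (S n).1 i ∈ (h :: (List.range n).map (S n).1) :=
        List.mem_cons_of_mem _ (List.mem_map.2 ⟨i, List.mem_range.2 hi, rfl⟩)
      have := hx' _ this
      rwa [stab n i hi] at this
  refine ⟨u, huA, ?_⟩
  intro x
  by_contra hnot
  rw [Metric.tendsto_atTop] at hnot
  push_neg at hnot
  obtain ⟨δ, hδ, hfreq⟩ := hnot
  have hfreq' : ∃ᶠ n in atTop, δ ≤ dist (u n x) (h x) :=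
    frequently_atTop.2 fun N => (hfreq N).imp (fun n hn => ⟨hn.1, hn.2⟩)
  obtain ⟨ψ₀, hψ₀mono, hψ₀⟩ := extraction_of_frequently_atTop hfreq'
  -- extract further so values at x converge
  have hvmem : ∀ k, u (ψ₀ k) x ∈ (fun g : K → ℝ => g x) '' H :=
    fun k => ⟨u (ψ₀ k), hAH (huA _), rfl⟩
  obtain ⟨L, _, φ, hφmono, hφ⟩ := (hH.image (continuous_apply x)).tendsto_subseq hvmem
  set ψ : ℕ → ℕ := ψ₀ ∘ φ with hψdef
  have hψmono : StrictMono ψ := hψ₀mono.comp hφmono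
  have hψδ : ∀ k, δ ≤ dist (u (ψ k) x) (h x) := fun k => hψ₀ (φ k)
  have hψL : Tendsto (fun k => u (ψ k) x) atTop (𝓝 L) := hφ
  -- cluster function h⋆
  have hmapH : map (fun k => u (ψ k)) atTop ≤ 𝓟 H := by
    rw [le_principal_iff, mem_map]
    filter_upwards with k
    exact hAH (huA (ψ k))
  obtain ⟨hs, hsH, hscl⟩ := hH.exists_mapClusterPt hmapH
  have hscont : Continuous hs := hcont _ hsH
  -- the approximating points xm
  choose xm hxmT hxmh hxmu using fun m => P2 m x
  -- cluster point of xm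
  have hxmap : map xm atTop ≤ 𝓟 (univ : Set K) := le_principal_iff.2 (by simp)
  obtain ⟨xd, _, hxdcl⟩ := isCompact_univ.exists_mapClusterPt hxmap
  -- h xd = h x
  have key_closed : ∀ (g : K → ℝ), Continuous g →
      (∀ᶠ m in atTop, |g x - g (xm m)| ≤ 1 / (m + 1)) → g xd = g x := by
    intro g hg hev
    refine (real_eq_of_le fun ε hε => ?_)
    have hev2 : ∀ᶠ m : ℕ in atTop, (1 : ℝ) / (m + 1) ≤ ε := hle ε hε
    have hev3 : ∀ᶠ m in atTop, xm m ∈ {y | |g y - g x| ≤ ε} := by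
      filter_upwards [hev, hev2] with m h1 h2
      have : |g x - g (xm m)| ≤ ε := h1.trans h2
      simpa [abs_sub_comm] using this
    have hcl2 : xd ∈ {y | |g y - g x| ≤ ε} := by
      refine cluster_mem_closed hxdcl ?_ hev3
      exact isClosed_le (by fun_prop) continuous_const
    exact hcl2
  have hhxd : h xd = h x :=
    key_closed h (hcont _ hhH) (Eventually.of_forall fun m => hxmh m)
  have huxd : ∀ i, u i xd = u i x := by
    intro i
    refine key_closed (u i) (hucont i) ?_
    filter_upwards [eventually_gt_atTop i] with m hm
    exact hxmu m i hm
  -- u n (xm m) → h (xm m) for each m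
  have htmm : ∀ m, Tendsto (fun n => u n (xm m)) atTop (𝓝 (h (xm m))) := by
    intro m
    rw [Metric.tendsto_atTop]
    intro ε hε
    obtain ⟨N, hN⟩ := eventually_atTop.1 (hle ε hε)
    refine ⟨max m N, fun n hn => ?_⟩
    have h1 : xm m ∈ T n := P3 m n (le_trans (le_max_left _ _) hn) (hxmT m)
    have h2 : |u n (xm m) - h (xm m)| < 1 / (n + 1) := P1 n _ h1
    have h3 : (1:ℝ) / (n + 1) ≤ ε := hN n (le_trans (le_max_right _ _) hn)
    rw [Real.dist_eq]
    linarith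
  -- hs agrees with h at each xm m
  have hsxm : ∀ m, hs (xm m) = h (xm m) := by
    intro m
    have hcl3 : MapClusterPt (hs (xm m)) atTop ((fun g : K → ℝ => g (xm m)) ∘ fun k => u (ψ k)) :=
      hscl.continuousAt_comp (continuous_apply (xm m)).continuousAt
    have htend : Tendsto (fun k => u (ψ k) (xm m)) atTop (𝓝 (h (xm m))) :=
      (htmm m).comp hψmono.tendsto_atTop
    exact cluster_eq_of_tendsto hcl3 htend
  -- hence hs xd = h xd = h x
  have hsxd : hs xd = h x := by
    have hD : xd ∈ {y | hs y = h y} := by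
      refine cluster_mem_closed hxdcl ?_ (Eventually.of_forall fun m => hsxm m)
      exact isClosed_eq hscont (hcont _ hhH)
    rw [Set.mem_setOf_eq] at hD
    rw [hD, hhxd]
  -- but also hs xd = L
  have hsxdL : hs xd = L := by
    have hcl4 : MapClusterPt (hs xd) atTop ((fun g : K → ℝ => g xd) ∘ fun k => u (ψ k)) :=
      hscl.continuousAt_comp (continuous_apply xd).continuousAt
    have heq : (fun k => u (ψ k) xd) = fun k => u (ψ k) x := by
      funext k; exact huxd (ψ k)
    have htend : Tendsto (fun k => u (ψ k) xd) atTop (𝓝 L) := by rw [heq]; exact hψL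
    exact cluster_eq_of_tendsto hcl4 htend
  -- and δ ≤ |L - h x|
  have hLfar : δ ≤ dist L (h x) := by
    have : ∀ k, (fun k => u (ψ k) x) k ∈ {t : ℝ | δ ≤ dist t (h x)} := fun k => hψδ k
    have hcl5 : L ∈ {t : ℝ | δ ≤ dist t (h x)} := by
      refine IsClosed.mem_of_tendsto ?_ hψL (Eventually.of_forall this)
      exact isClosed_le continuous_const (by fun_prop)
    exact hcl5
  rw [hsxd] at hsxdL
  rw [← hsxdL] at hLfar
  simp [dist_self] at hLfar
  linarith


end Aux

lemma cont_int {G : Type*} [TopologicalSpace G] [CompactSpace G] [MeasurableSpace G]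
    [OpensMeasurableSpace G] [Nonempty G] {μ : Measure G} [IsFiniteMeasure μ]
    {g : G → ℝ} (hg : Continuous g) : Integrable g μ := by
  obtain ⟨c, -, hc⟩ := isCompact_univ.exists_isMaxOn univ_nonempty hg.abs.continuousOn
  exact (integrable_const |g c|).mono' hg.aestronglyMeasurable
    (Eventually.of_forall fun y => by simpa using hc (mem_univ y))

section Rho

variable {F Z : Type*} [Group F] [TopologicalSpace F] [IsTopologicalGroup F]
    [CompactSpace F] [T2Space F] [TopologicalSpace Z] [CompactSpace Z] [T2Space Z]
    [MulAction F Z] [MeasurableSpace F] [BorelSpace F]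

lemma rho_cont [Nonempty Z] (h1 : ∀ f : F, Continuous fun z : Z => f • z)
    (h2 : ∀ z : Z, Continuous fun f : F => f • z)
    (μ : Measure F) [IsFiniteMeasure μ] (φ : Z → ℝ) (hφ : Continuous φ) :
    Continuous fun p : Z × Z => ∫ f, |φ (f⁻¹ • p.1) - φ (f⁻¹ • p.2)| ∂μ := by
  classical
  obtain ⟨B, hB⟩ : ∃ B, ∀ z : Z, |φ z| ≤ B := by
    obtain ⟨c, -, hc⟩ := isCompact_univ.exists_isMaxOn univ_nonempty hφ.abs.continuousOn
    exact ⟨|φ c|, fun z => hc (mem_univ z)⟩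
  set Ψ : Z × Z → (F → ℝ) := fun p f => |φ (f⁻¹ • p.1) - φ (f⁻¹ • p.2)| with hΨdef
  have hΨc : Continuous Ψ := by
    apply continuous_pi
    intro f
    exact ((hφ.comp ((h1 f⁻¹).comp continuous_fst)).sub
      (hφ.comp ((h1 f⁻¹).comp continuous_snd))).abs
  set H : Set (F → ℝ) := range Ψ with hHdef
  have hHc : IsCompact H := isCompact_range hΨc
  have hHcont : ∀ g ∈ H, Continuous g := by
    rintro g ⟨⟨z, w⟩, rfl⟩
    exact ((hφ.comp ((h2 z).comp continuous_inv)).sub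
      (hφ.comp ((h2 w).comp continuous_inv))).abs
  have hHbdd : ∀ g ∈ H, ∀ f : F, |g f| ≤ 2 * B := by
    rintro g ⟨⟨z, w⟩, rfl⟩ f
    have := abs_sub (φ (f⁻¹ • z)) (φ (f⁻¹ • w))
    have h1' := hB (f⁻¹ • z)
    have h2' := hB (f⁻¹ • w)
    have : |Ψ (z, w) f| = |φ (f⁻¹ • z) - φ (f⁻¹ • w)| := abs_abs _
    rw [this]
    calc |φ (f⁻¹ • z) - φ (f⁻¹ • w)| ≤ |φ (f⁻¹ • z)| + |φ (f⁻¹ • w)| := abs_sub _ _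
      _ ≤ 2 * B := by linarith
  set I : (F → ℝ) → ℝ := fun g => ∫ f, g f ∂μ with hIdef
  have key : ∀ C : Set ℝ, IsClosed C → IsClosed {g | g ∈ H ∧ I g ∈ C} := by
    intro C hC
    refine isClosed_of_closure_subset ?_
    intro g hg
    have hgH : g ∈ H := by
      have : closure {g | g ∈ H ∧ I g ∈ C} ⊆ closure H :=
        closure_mono fun a ha => ha.1
      exact (hHc.isClosed.closure_subset) (this hg)
    obtain ⟨u, huA, hulim⟩ := ang hHc hHcont
      (fun a (ha : a ∈ {g | g ∈ H ∧ I g ∈ C}) => ha.1) hgH hg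
    have hIu : Tendsto (fun n => I (u n)) atTop (𝓝 (I g)) := by
      apply tendsto_integral_of_dominated_convergence (fun _ => 2 * B)
      · exact fun n => (hHcont _ (huA n).1).aestronglyMeasurable
      · exact integrable_const _
      · intro n
        exact Eventually.of_forall fun f => by
          simpa using hHbdd _ (huA n).1 f
      · exact Eventually.of_forall fun f => hulim f
    have : ∀ n, I (u n) ∈ C := fun n => (huA n).2
    exact ⟨hgH, hC.mem_of_tendsto hIu (Eventually.of_forall this)⟩
  have : (fun p : Z × Z => ∫ f, |φ (f⁻¹ • p.1) - φ (f⁻¹ • p.2)| ∂μ) = I ∘ Ψ := rfl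
  rw [this]
  rw [continuous_iff_isClosed]
  intro C hC
  have hpre : (I ∘ Ψ) ⁻¹' C = Ψ ⁻¹' {g | g ∈ H ∧ I g ∈ C} := by
    ext p
    simp only [mem_preimage, Function.comp_apply, mem_setOf_eq]
    exact ⟨fun h => ⟨mem_range_self p, h⟩, fun h => h.2⟩
  rw [hpre]
  exact (key C hC).preimage hΨc

end Rho


/-- Ellis joint continuity, compact group case: a separately continuous
action of a compact Hausdorff topological group on a compact Hausdorff space is jointly
continuous. -/
theorem stmt10 (F Z : Type*) [Group F] [TopologicalSpace F] [IsTopologicalGroup F]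
    [CompactSpace F] [T2Space F] [TopologicalSpace Z] [CompactSpace Z] [T2Space Z]
    [MulAction F Z]
    (h1 : ∀ f : F, Continuous fun z : Z => f • z)
    (h2 : ∀ z : Z, Continuous fun f : F => f • z) :
    Continuous fun p : F × Z => p.1 • p.2 := by
  rcases isEmpty_or_nonempty Z with hZ | hZ
  · exact continuous_iff_continuousAt.2 fun p => (IsEmpty.false p.2).elim
  haveI : Nonempty F := ⟨1⟩
  borelize F
  set μ : Measure F := Measure.haarMeasure (⊤ : TopologicalSpace.PositiveCompacts F) with hμdef
  rw [continuous_iff_continuousAt]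
  rintro ⟨f₀, z₀⟩
  rw [ContinuousAt, tendsto_nhds]
  intro U hU hbU
  simp only at hbU
  set b : Z := f₀ • z₀ with hbdef
  obtain ⟨φ, hφ0, hφ1, hφicc⟩ := exists_continuous_zero_one_of_isClosed
    (isClosed_compl_iff.2 hU) (isClosed_singleton (x := b))
    (by simp [disjoint_singleton_right, hbU])
  set ρ : Z × Z → ℝ := fun p => ∫ f, |φ (f⁻¹ • p.1) - φ (f⁻¹ • p.2)| ∂μ with hρdef
  have hρc : Continuous ρ := rho_cont h1 h2 μ φ φ.continuous
  have hρdiag : ∀ z, ρ (z, z) = 0 := by intro z; simp [hρdef]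
  have hint : ∀ z w : Z, Integrable (fun f : F => |φ (f⁻¹ • z) - φ (f⁻¹ • w)|) μ := by
    intro z w
    exact cont_int (((φ.continuous.comp ((h2 z).comp continuous_inv)).sub
      (φ.continuous.comp ((h2 w).comp continuous_inv))).abs)
  have hρtri : ∀ a c d : Z, ρ (a, d) ≤ ρ (a, c) + ρ (c, d) := by
    intro a c d
    have hle : ∀ f : F, |φ (f⁻¹ • a) - φ (f⁻¹ • d)|
        ≤ |φ (f⁻¹ • a) - φ (f⁻¹ • c)| + |φ (f⁻¹ • c) - φ (f⁻¹ • d)| := fun f =>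
      abs_sub_le _ _ _
    calc ρ (a, d) ≤ ∫ f, (|φ (f⁻¹ • a) - φ (f⁻¹ • c)| + |φ (f⁻¹ • c) - φ (f⁻¹ • d)|) ∂μ := by
          exact integral_mono (hint a d) ((hint a c).add (hint c d)) hle
      _ = ρ (a, c) + ρ (c, d) := integral_add (hint a c) (hint c d)
  have hρinv : ∀ (g : F) (z w : Z), ρ (g • z, g • w) = ρ (z, w) := by
    intro g z w
    have he : ∀ f : F, |φ (f⁻¹ • g • z) - φ (f⁻¹ • g • w)|
        = (fun u : F => |φ (u⁻¹ • z) - φ (u⁻¹ • w)|) (g⁻¹ * f) := by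
      intro f
      simp only [mul_inv_rev, inv_inv, mul_smul]
    calc (∫ f, |φ (f⁻¹ • g • z) - φ (f⁻¹ • g • w)| ∂μ)
        = ∫ f, (fun u : F => |φ (u⁻¹ • z) - φ (u⁻¹ • w)|) (g⁻¹ * f) ∂μ := by
          congr 1
          funext f
          exact he f
      _ = ∫ u, |φ (u⁻¹ • z) - φ (u⁻¹ • w)| ∂μ := by
          simpa using integral_mul_left_eq_self
            (fun u : F => |φ (u⁻¹ • z) - φ (u⁻¹ • w)|) g⁻¹
  have hρpos : ∀ w : Z, w ∈ Uᶜ → 0 < ρ (w, b) := by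
    intro w hw
    have hnn : (0 : F → ℝ) ≤ fun f : F => |φ (f⁻¹ • w) - φ (f⁻¹ • b)| := fun f => abs_nonneg _
    show (0:ℝ) < ∫ f, |φ (f⁻¹ • w) - φ (f⁻¹ • b)| ∂μ
    rw [integral_pos_iff_support_of_nonneg hnn (hint w b)]
    have hcont : Continuous fun f : F => |φ (f⁻¹ • w) - φ (f⁻¹ • b)| :=
      ((φ.continuous.comp ((h2 w).comp continuous_inv)).sub
        (φ.continuous.comp ((h2 b).comp continuous_inv))).abs
    have hopen : IsOpen (Function.support fun f : F => |φ (f⁻¹ • w) - φ (f⁻¹ • b)|) := by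
      have he2 : (Function.support fun f : F => |φ (f⁻¹ • w) - φ (f⁻¹ • b)|)
          = (fun f : F => |φ (f⁻¹ • w) - φ (f⁻¹ • b)|) ⁻¹' ({0}ᶜ) := rfl
      rw [he2]
      exact (isOpen_compl_iff.2 isClosed_singleton).preimage hcont
    have hmem1 : (1:F) ∈ Function.support fun f : F => |φ (f⁻¹ • w) - φ (f⁻¹ • b)| := by
      have e1 : φ w = 0 := hφ0 hw
      have e2 : φ b = 1 := hφ1 rfl
      simp only [Function.mem_support, inv_one, one_smul]
      rw [e1, e2]
      norm_num
    exact hopen.measure_pos μ ⟨1, hmem1⟩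
  rcases eq_empty_or_nonempty (Uᶜ : Set Z) with hUc | ⟨w₀, hw₀⟩
  · refine Eventually.of_forall fun p => ?_
    by_contra hnot
    have : (p.1 • p.2 : Z) ∈ (Uᶜ : Set Z) := hnot
    rw [hUc] at this
    exact this
  · have hcontwb : Continuous fun w : Z => ρ (w, b) :=
      hρc.comp (continuous_id.prodMk continuous_const)
    obtain ⟨w₁, hw₁, hmin⟩ := ((isClosed_compl_iff.2 hU).isCompact).exists_isMinOn ⟨w₀, hw₀⟩
      hcontwb.continuousOn
    have hm : 0 < ρ (w₁, b) := hρpos w₁ hw₁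
    set g : F × Z → ℝ := fun p => ρ (p.2, z₀) + ρ (p.1 • z₀, b) with hgdef
    have hgc : Continuous g := (hρc.comp (continuous_snd.prodMk continuous_const)).add
      (hρc.comp (((h2 z₀).comp continuous_fst).prodMk continuous_const))
    have hg0 : g (f₀, z₀) = 0 := by
      show ρ (z₀, z₀) + ρ (f₀ • z₀, b) = 0
      rw [hρdiag z₀]
      have : (f₀ • z₀ : Z) = b := rfl
      rw [this, hρdiag b]
      ring
    have htend : Tendsto g (𝓝 (f₀, z₀)) (𝓝 0) := by
      have h5 : Tendsto g (𝓝 (f₀, z₀)) (𝓝 (g (f₀, z₀))) := hgc.continuousAt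
      rwa [hg0] at h5
    have hev : ∀ᶠ p in 𝓝 (f₀, z₀), g p < ρ (w₁, b) := htend.eventually_lt_const hm
    filter_upwards [hev] with p hp
    by_contra hnot
    have hq : ρ (p.1 • p.2, b) ≤ g p := by
      calc ρ (p.1 • p.2, b) ≤ ρ (p.1 • p.2, p.1 • z₀) + ρ (p.1 • z₀, b) := hρtri _ _ _
        _ = ρ (p.2, z₀) + ρ (p.1 • z₀, b) := by rw [hρinv]
    have hge : ρ (w₁, b) ≤ ρ (p.1 • p.2, b) := hmin (mem_compl hnot)
    linarith
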